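/- The seven three-qubit arrays 0, [1,1,1], [1,1,1]+[2,2,1], [1,1,1]+[2,1,2], [1,1,1]+[1,2,2], [1,1,1]+[1,2,2]+[2,1,2], and [1,1,1]+[2,2,2] lie in pairwise distinct orbits of the action of GL₂(ℝ) × GL₂(ℝ) × GL₂(ℝ): for any two distinct arrays u, u' in this list, there is no triple of invertible 2×2 real matrices (g₁,g₂,g₃) with g·u = u'. In particular, the GHZ state [1,1,1]+[2,2,2] and the W-type state [1,1,1]+[1,2,2]+[2,1,2] are inequivalent. -/
import Mathlib

/-- The basis array `[a,b,c]`: equal to `1` at index `(a,b,c)` and `0`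
elsewhere.  The paper's indices `1, 2` correspond to `0, 1 : Fin 2`. -/
def e (a b c : Fin 2) : Fin 2 → Fin 2 → Fin 2 → ℝ :=
  fun i j k => if i = a ∧ j = b ∧ k = c then 1 else 0

/-- Action of a triple of matrices on a three-qubit coordinate array:
`(g·v) j₁ j₂ j₃ = ∑ k₁ k₂ k₃, v k₁ k₂ k₃ * g₁ k₁ j₁ * g₂ k₂ j₂ * g₃ k₃ j₃`. -/
def act (g₁ g₂ g₃ : Matrix (Fin 2) (Fin 2) ℝ) (v : Fin 2 → Fin 2 → Fin 2 → ℝ) :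
    Fin 2 → Fin 2 → Fin 2 → ℝ :=
  fun j₁ j₂ j₃ => ∑ k₁, ∑ k₂, ∑ k₃, v k₁ k₂ k₃ * g₁ k₁ j₁ * g₂ k₂ j₂ * g₃ k₃ j₃

/-- The seven representative three-qubit arrays: `0`, `[1,1,1]`,
`[1,1,1]+[2,2,1]`, `[1,1,1]+[2,1,2]`, `[1,1,1]+[1,2,2]`,
`[1,1,1]+[1,2,2]+[2,1,2]` (W), and `[1,1,1]+[2,2,2]` (GHZ). -/
def vs : Fin 7 → (Fin 2 → Fin 2 → Fin 2 → ℝ) :=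
  ![0, e 0 0 0, e 0 0 0 + e 1 1 0, e 0 0 0 + e 1 0 1, e 0 0 0 + e 0 1 1,
    e 0 0 0 + e 0 1 1 + e 1 0 1, e 0 0 0 + e 1 1 1]

lemma act_act (g₁ g₂ g₃ h₁ h₂ h₃ : Matrix (Fin 2) (Fin 2) ℝ) (v : Fin 2 → Fin 2 → Fin 2 → ℝ) :
    act g₁ g₂ g₃ (act h₁ h₂ h₃ v) = act (h₁ * g₁) (h₂ * g₂) (h₃ * g₃) v := by
  funext j₁ j₂ j₃
  simp only [act, Fin.sum_univ_two, Matrix.mul_apply]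
  ring

lemma act_one (v : Fin 2 → Fin 2 → Fin 2 → ℝ) : act 1 1 1 v = v := by
  funext j₁ j₂ j₃
  fin_cases j₁ <;> fin_cases j₂ <;> fin_cases j₃ <;>
    simp [act, Fin.sum_univ_two, Matrix.one_apply]

lemma slices_dep (u w : Fin 2 → Fin 2 → ℝ)
    (h : ∀ a b c d, u a b * w c d = u c d * w a b) :
    ∃ c : ℝ, (∀ a b, w a b = c * u a b) ∨ (∀ a b, u a b = c * w a b) := by
  by_cases hu : ∀ a b, u a b = 0
  · exact ⟨0, Or.inr fun a b => by rw [hu a b]; ring⟩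
  · push_neg at hu
    obtain ⟨a₀, b₀, h₀⟩ := hu
    refine ⟨w a₀ b₀ / u a₀ b₀, Or.inl fun a b => ?_⟩
    field_simp
    linarith [h a b a₀ b₀]

/-- Rank-one condition on the first flattening. -/
def R1 (v : Fin 2 → Fin 2 → Fin 2 → ℝ) : Prop :=
  ∀ a b c d : Fin 2, v 0 a b * v 1 c d = v 0 c d * v 1 a b
/-- Rank-one condition on the second flattening. -/
def R2 (v : Fin 2 → Fin 2 → Fin 2 → ℝ) : Prop :=
  ∀ a b c d : Fin 2, v a 0 b * v c 1 d = v c 0 d * v a 1 b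
/-- Rank-one condition on the third flattening. -/
def R3 (v : Fin 2 → Fin 2 → Fin 2 → ℝ) : Prop :=
  ∀ a b c d : Fin 2, v a b 0 * v c d 1 = v c d 0 * v a b 1

lemma R1_act (g₁ g₂ g₃ : Matrix (Fin 2) (Fin 2) ℝ) (v : Fin 2 → Fin 2 → Fin 2 → ℝ)
    (h : R1 v) : R1 (act g₁ g₂ g₃ v) := by
  obtain ⟨c, hc | hc⟩ := slices_dep (fun a b => v 0 a b) (fun a b => v 1 a b) h
  all_goals
    intro a b c' d
    simp only [act, Fin.sum_univ_two, hc]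
    ring

lemma R2_act (g₁ g₂ g₃ : Matrix (Fin 2) (Fin 2) ℝ) (v : Fin 2 → Fin 2 → Fin 2 → ℝ)
    (h : R2 v) : R2 (act g₁ g₂ g₃ v) := by
  obtain ⟨c, hc | hc⟩ := slices_dep (fun a b => v a 0 b) (fun a b => v a 1 b)
    (fun a b c d => h a b c d)
  all_goals
    intro a b c' d
    simp only [act, Fin.sum_univ_two, hc]
    ring

lemma R3_act (g₁ g₂ g₃ : Matrix (Fin 2) (Fin 2) ℝ) (v : Fin 2 → Fin 2 → Fin 2 → ℝ)
    (h : R3 v) : R3 (act g₁ g₂ g₃ v) := by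
  obtain ⟨c, hc | hc⟩ := slices_dep (fun a b => v a b 0) (fun a b => v a b 1)
    (fun a b c d => h a b c d)
  all_goals
    intro a b c' d
    simp only [act, Fin.sum_univ_two, hc]
    ring

/-- Cayley's hyperdeterminant of a `2 × 2 × 2` array. -/
def Det (v : Fin 2 → Fin 2 → Fin 2 → ℝ) : ℝ :=
  (v 0 0 0 * v 1 1 1 + v 0 1 1 * v 1 0 0 - v 0 0 1 * v 1 1 0 - v 0 1 0 * v 1 0 1)^2
    - 4 * (v 0 0 0 * v 0 1 1 - v 0 0 1 * v 0 1 0) * (v 1 0 0 * v 1 1 1 - v 1 0 1 * v 1 1 0)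

lemma Det_act1 (g : Matrix (Fin 2) (Fin 2) ℝ) (v : Fin 2 → Fin 2 → Fin 2 → ℝ) :
    Det (act g 1 1 v) = (g 0 0 * g 1 1 - g 0 1 * g 1 0)^2 * Det v := by
  simp [Det, act, Fin.sum_univ_two, Matrix.one_apply]
  ring

lemma Det_act2 (g : Matrix (Fin 2) (Fin 2) ℝ) (v : Fin 2 → Fin 2 → Fin 2 → ℝ) :
    Det (act 1 g 1 v) = (g 0 0 * g 1 1 - g 0 1 * g 1 0)^2 * Det v := by
  simp [Det, act, Fin.sum_univ_two, Matrix.one_apply]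
  ring

lemma Det_act3 (g : Matrix (Fin 2) (Fin 2) ℝ) (v : Fin 2 → Fin 2 → Fin 2 → ℝ) :
    Det (act 1 1 g v) = (g 0 0 * g 1 1 - g 0 1 * g 1 0)^2 * Det v := by
  simp [Det, act, Fin.sum_univ_two, Matrix.one_apply]
  ring

lemma Det_act (g₁ g₂ g₃ : Matrix (Fin 2) (Fin 2) ℝ) (v : Fin 2 → Fin 2 → Fin 2 → ℝ) :
    Det (act g₁ g₂ g₃ v) =
      ((g₁ 0 0 * g₁ 1 1 - g₁ 0 1 * g₁ 1 0) * (g₂ 0 0 * g₂ 1 1 - g₂ 0 1 * g₂ 1 0)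
        * (g₃ 0 0 * g₃ 1 1 - g₃ 0 1 * g₃ 1 0))^2 * Det v := by
  have h : act g₁ g₂ g₃ v = act g₁ 1 1 (act 1 g₂ 1 (act 1 1 g₃ v)) := by
    rw [act_act, act_act]; simp
  rw [h, Det_act1, Det_act2, Det_act3]; ring

lemma distinguish (P : (Fin 2 → Fin 2 → Fin 2 → ℝ) → Prop)
    (hP : ∀ (g₁ g₂ g₃ : Matrix (Fin 2) (Fin 2) ℝ) v, P v → P (act g₁ g₂ g₃ v))
    {u w : Fin 2 → Fin 2 → Fin 2 → ℝ} (hu : P u) (hw : ¬ P w) :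
    (¬ ∃ g₁ g₂ g₃ : Matrix.GeneralLinearGroup (Fin 2) ℝ,
        act (g₁ : Matrix (Fin 2) (Fin 2) ℝ) (g₂ : Matrix (Fin 2) (Fin 2) ℝ)
          (g₃ : Matrix (Fin 2) (Fin 2) ℝ) u = w) ∧
    (¬ ∃ g₁ g₂ g₃ : Matrix.GeneralLinearGroup (Fin 2) ℝ,
        act (g₁ : Matrix (Fin 2) (Fin 2) ℝ) (g₂ : Matrix (Fin 2) (Fin 2) ℝ)
          (g₃ : Matrix (Fin 2) (Fin 2) ℝ) w = u) := by
  constructor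
  · rintro ⟨g₁, g₂, g₃, hg⟩
    exact hw (hg ▸ hP _ _ _ u hu)
  · rintro ⟨g₁, g₂, g₃, hg⟩
    apply hw
    have h2 : w = act (↑g₁⁻¹) (↑g₂⁻¹) (↑g₃⁻¹) u := by
      rw [← hg, act_act]
      simp only [Units.mul_inv, act_one]
    rw [h2]
    exact hP _ _ _ _ hu

lemma zero_act (g₁ g₂ g₃ : Matrix (Fin 2) (Fin 2) ℝ) (v : Fin 2 → Fin 2 → Fin 2 → ℝ)
    (h : v = 0) : act g₁ g₂ g₃ v = 0 := by
  subst h; funext j₁ j₂ j₃; simp [act]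

lemma detzero_act (g₁ g₂ g₃ : Matrix (Fin 2) (Fin 2) ℝ) (v : Fin 2 → Fin 2 → Fin 2 → ℝ)
    (h : Det v = 0) : Det (act g₁ g₂ g₃ v) = 0 := by
  rw [Det_act, h, mul_zero]


lemma vsr1 : vs 1 = e 0 0 0 := rfl
lemma vsr2 : vs 2 = e 0 0 0 + e 1 1 0 := rfl
lemma vsr3 : vs 3 = e 0 0 0 + e 1 0 1 := rfl
lemma vsr4 : vs 4 = e 0 0 0 + e 0 1 1 := rfl
lemma vsr5 : vs 5 = e 0 0 0 + e 0 1 1 + e 1 0 1 := rfl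
lemma vsr6 : vs 6 = e 0 0 0 + e 1 1 1 := rfl

-- evaluations
lemma hz0 : vs 0 = 0 := rfl
lemma nz1 : ¬ vs 1 = 0 := by
  intro h; have := congrFun (congrFun (congrFun h 0) 0) 0; norm_num [vsr1, vsr2, vsr3, vsr4, vsr5, vsr6, e] at this
lemma nz2 : ¬ vs 2 = 0 := by
  intro h; have := congrFun (congrFun (congrFun h 0) 0) 0; norm_num [vsr1, vsr2, vsr3, vsr4, vsr5, vsr6, e] at this
lemma nz3 : ¬ vs 3 = 0 := by
  intro h; have := congrFun (congrFun (congrFun h 0) 0) 0; norm_num [vsr1, vsr2, vsr3, vsr4, vsr5, vsr6, e] at this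
lemma nz4 : ¬ vs 4 = 0 := by
  intro h; have := congrFun (congrFun (congrFun h 0) 0) 0; norm_num [vsr1, vsr2, vsr3, vsr4, vsr5, vsr6, e] at this
lemma nz5 : ¬ vs 5 = 0 := by
  intro h; have := congrFun (congrFun (congrFun h 0) 0) 0; norm_num [vsr1, vsr2, vsr3, vsr4, vsr5, vsr6, e] at this
lemma nz6 : ¬ vs 6 = 0 := by
  intro h; have := congrFun (congrFun (congrFun h 0) 0) 0; norm_num [vsr1, vsr2, vsr3, vsr4, vsr5, vsr6, e] at this

lemma r1_1 : R1 (vs 1) := by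
  intro a b c d; fin_cases a <;> fin_cases b <;> fin_cases c <;> fin_cases d <;>
    norm_num [vsr1, vsr2, vsr3, vsr4, vsr5, vsr6, e]
lemma r1_4 : R1 (vs 4) := by
  intro a b c d; fin_cases a <;> fin_cases b <;> fin_cases c <;> fin_cases d <;>
    norm_num [vsr1, vsr2, vsr3, vsr4, vsr5, vsr6, e]
lemma r2_1 : R2 (vs 1) := by
  intro a b c d; fin_cases a <;> fin_cases b <;> fin_cases c <;> fin_cases d <;>
    norm_num [vsr1, vsr2, vsr3, vsr4, vsr5, vsr6, e]
lemma r2_3 : R2 (vs 3) := by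
  intro a b c d; fin_cases a <;> fin_cases b <;> fin_cases c <;> fin_cases d <;>
    norm_num [vsr1, vsr2, vsr3, vsr4, vsr5, vsr6, e]
lemma r3_2 : R3 (vs 2) := by
  intro a b c d; fin_cases a <;> fin_cases b <;> fin_cases c <;> fin_cases d <;>
    norm_num [vsr1, vsr2, vsr3, vsr4, vsr5, vsr6, e]

lemma nr1_2 : ¬ R1 (vs 2) := by intro h; have := h 0 0 1 0; norm_num [vsr1, vsr2, vsr3, vsr4, vsr5, vsr6, e] at this
lemma nr1_3 : ¬ R1 (vs 3) := by intro h; have := h 0 0 0 1; norm_num [vsr1, vsr2, vsr3, vsr4, vsr5, vsr6, e] at this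
lemma nr1_5 : ¬ R1 (vs 5) := by intro h; have := h 0 0 0 1; norm_num [vsr1, vsr2, vsr3, vsr4, vsr5, vsr6, e] at this
lemma nr1_6 : ¬ R1 (vs 6) := by intro h; have := h 0 0 1 1; norm_num [vsr1, vsr2, vsr3, vsr4, vsr5, vsr6, e] at this
lemma nr2_4 : ¬ R2 (vs 4) := by intro h; have := h 0 0 0 1; norm_num [vsr1, vsr2, vsr3, vsr4, vsr5, vsr6, e] at this
lemma nr2_5 : ¬ R2 (vs 5) := by intro h; have := h 0 0 0 1; norm_num [vsr1, vsr2, vsr3, vsr4, vsr5, vsr6, e] at this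
lemma nr2_6 : ¬ R2 (vs 6) := by intro h; have := h 0 0 1 1; norm_num [vsr1, vsr2, vsr3, vsr4, vsr5, vsr6, e] at this
lemma nr3_3 : ¬ R3 (vs 3) := by intro h; have := h 0 0 1 0; norm_num [vsr1, vsr2, vsr3, vsr4, vsr5, vsr6, e] at this
lemma nr3_4 : ¬ R3 (vs 4) := by intro h; have := h 0 0 0 1; norm_num [vsr1, vsr2, vsr3, vsr4, vsr5, vsr6, e] at this
lemma nr3_5 : ¬ R3 (vs 5) := by intro h; have := h 0 0 0 1; norm_num [vsr1, vsr2, vsr3, vsr4, vsr5, vsr6, e] at this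
lemma nr3_6 : ¬ R3 (vs 6) := by intro h; have := h 0 0 1 1; norm_num [vsr1, vsr2, vsr3, vsr4, vsr5, vsr6, e] at this

lemma d5 : Det (vs 5) = 0 := by norm_num [Det, vsr5, vsr6, e]
lemma nd6 : ¬ Det (vs 6) = 0 := by norm_num [Det, vsr5, vsr6, e]

/-- **The seven representative three-qubit states are pairwise inequivalent**
under the action of `GL₂(ℝ) × GL₂(ℝ) × GL₂(ℝ)`.  In particular the GHZ state
and the W state are inequivalent. -/
theorem three_qubit_representatives_pairwise_inequivalent :
    ∀ i j : Fin 7, i ≠ j →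
      ¬ ∃ g₁ g₂ g₃ : Matrix.GeneralLinearGroup (Fin 2) ℝ,
          act (g₁ : Matrix (Fin 2) (Fin 2) ℝ) (g₂ : Matrix (Fin 2) (Fin 2) ℝ)
            (g₃ : Matrix (Fin 2) (Fin 2) ℝ) (vs i) = vs j := by
  have D01 := distinguish _ zero_act hz0 nz1
  have D02 := distinguish _ zero_act hz0 nz2
  have D03 := distinguish _ zero_act hz0 nz3
  have D04 := distinguish _ zero_act hz0 nz4
  have D05 := distinguish _ zero_act hz0 nz5
  have D06 := distinguish _ zero_act hz0 nz6
  have D12 := distinguish R1 R1_act r1_1 nr1_2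
  have D13 := distinguish R1 R1_act r1_1 nr1_3
  have D14 := distinguish R2 R2_act r2_1 nr2_4
  have D15 := distinguish R1 R1_act r1_1 nr1_5
  have D16 := distinguish R1 R1_act r1_1 nr1_6
  have D23 := distinguish R3 R3_act r3_2 nr3_3
  have D24 := distinguish R3 R3_act r3_2 nr3_4
  have D25 := distinguish R3 R3_act r3_2 nr3_5
  have D26 := distinguish R3 R3_act r3_2 nr3_6
  have D34 := distinguish R2 R2_act r2_3 nr2_4
  have D35 := distinguish R2 R2_act r2_3 nr2_5
  have D36 := distinguish R2 R2_act r2_3 nr2_6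
  have D45 := distinguish R1 R1_act r1_4 nr1_5
  have D46 := distinguish R1 R1_act r1_4 nr1_6
  have D56 := distinguish _ detzero_act d5 nd6
  intro i j hij
  fin_cases i <;> fin_cases j
  · exact absurd rfl hij
  · exact D01.1
  · exact D02.1
  · exact D03.1
  · exact D04.1
  · exact D05.1
  · exact D06.1
  · exact D01.2
  · exact absurd rfl hij
  · exact D12.1
  · exact D13.1
  · exact D14.1
  · exact D15.1
  · exact D16.1
  · exact D02.2
  · exact D12.2
  · exact absurd rfl hij
  · exact D23.1
  · exact D24.1
  · exact D25.1
  · exact D26.1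
  · exact D03.2
  · exact D13.2
  · exact D23.2
  · exact absurd rfl hij
  · exact D34.1
  · exact D35.1
  · exact D36.1
  · exact D04.2
  · exact D14.2
  · exact D24.2
  · exact D34.2
  · exact absurd rfl hij
  · exact D45.1
  · exact D46.1
  · exact D05.2
  · exact D15.2
  · exact D25.2
  · exact D35.2
  · exact D45.2
  · exact absurd rfl hij
  · exact D56.1
  · exact D06.2
  · exact D16.2
  · exact D26.2
  · exact D36.2
  · exact D46.2
  · exact D56.2
  · exact absurd rfl hij
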